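/- Let C ⊆ F_q^n be a nonzero linear code of dimension k with the Hamming metric. Then {α_1(C), ..., α_k(C)} ⊆ SLD(C), and α_1(C) = max SLD(C), α_k(C) = min SLD(C). -/

import Mathlib

open Module

/-- Hamming weight of a vector. -/
noncomputable def hwt {ι α : Type*} [Zero α] (x : ι → α) : ℕ := {i | x i ≠ 0}.ncard

/-- Minimum distance (minimum weight of a nonzero element) of a code `D`. -/
noncomputable def dminN {𝔽 V : Type*} [Field 𝔽] [AddCommGroup V] [Module 𝔽 V]
    (wt : V → ℕ) (D : Submodule 𝔽 V) : ℕ :=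
  sInf (wt '' {v : V | v ∈ D ∧ v ≠ 0})

/-- The `i`-th code distance of a code `C`: for `i ≤ dim C` the largest minimum distance of
an `i`-dimensional subcode of `C`, and for `i ≥ dim C` the largest minimum distance of an
`i`-dimensional supercode of `C` (both notions agree at `i = dim C`). -/
noncomputable def alphaN {𝔽 V : Type*} [Field 𝔽] [AddCommGroup V] [Module 𝔽 V]
    (wt : V → ℕ) (C : Submodule 𝔽 V) (i : ℕ) : ℕ :=
  if i ≤ finrank 𝔽 C then
    sSup (dminN wt '' {D : Submodule 𝔽 V | D ≤ C ∧ finrank 𝔽 D = i})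
  else
    sSup (dminN wt '' {D : Submodule 𝔽 V | C ≤ D ∧ finrank 𝔽 D = i})

/-- The dual code of `C` with respect to the standard inner product. -/
def dualCode {𝔽 : Type*} [Field 𝔽] {n : ℕ} (C : Submodule 𝔽 (Fin n → 𝔽)) :
    Submodule 𝔽 (Fin n → 𝔽) where
  carrier := {x | ∀ c ∈ C, ∑ i, c i * x i = 0}
  add_mem' := by
    intro a b ha hb c hc
    simp [mul_add, Finset.sum_add_distrib, ha c hc, hb c hc]
  zero_mem' := by intro c hc; simp
  smul_mem' := by
    intro r a ha c hc
    simp only [Pi.smul_apply, smul_eq_mul, mul_left_comm, ← Finset.mul_sum, ha c hc, mul_zero]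

/-- The set of numbers `s` such that some `s` columns of the matrix `H` are strongly
linearly dependent (a vanishing combination with all coefficients nonzero exists). -/
def SLDset {𝔽 : Type*} [Field 𝔽] {m n : ℕ} (H : Matrix (Fin m) (Fin n) 𝔽) : Set ℕ :=
  {s : ℕ | ∃ fs : Finset (Fin n), fs.card = s ∧ fs.Nonempty ∧
    ∃ c : Fin n → 𝔽, (∀ j ∈ fs, c j ≠ 0) ∧ ∑ j ∈ fs, c j • (fun r => H r j) = 0}


section aux

variable {𝔽 : Type*} [Field 𝔽] {n : ℕ}

noncomputable def dotB (𝔽 : Type*) [Field 𝔽] (n : ℕ) : LinearMap.BilinForm 𝔽 (Fin n → 𝔽) :=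
  LinearMap.mk₂ 𝔽 (fun x y => ∑ i, x i * y i)
    (fun x x' y => by simp [add_mul, Finset.sum_add_distrib])
    (fun a x y => by simp [Finset.mul_sum, mul_assoc])
    (fun x y y' => by simp [mul_add, Finset.sum_add_distrib])
    (fun a x y => by simp [Finset.mul_sum, mul_left_comm])

lemma dotB_apply (x y : Fin n → 𝔽) : dotB 𝔽 n x y = ∑ i, x i * y i := rfl

lemma dotB_isRefl : (dotB 𝔽 n).IsRefl := by
  intro x y h
  simpa [dotB_apply, mul_comm] using h

lemma dotB_nondeg : (dotB 𝔽 n).Nondegenerate := by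
  refine (LinearMap.IsRefl.nondegenerate_iff_separatingLeft (B := dotB 𝔽 n) dotB_isRefl).mpr ?_
  intro x h
  funext i
  have := h (Pi.single i 1)
  simpa [dotB_apply, Pi.single_apply, Finset.sum_ite_eq'] using this

lemma dualCode_eq_orthogonal (C : Submodule 𝔽 (Fin n → 𝔽)) :
    dualCode C = (dotB 𝔽 n).orthogonal C := rfl

lemma dualCode_dualCode (C : Submodule 𝔽 (Fin n → 𝔽)) : dualCode (dualCode C) = C := by
  rw [dualCode_eq_orthogonal, dualCode_eq_orthogonal,
    LinearMap.BilinForm.orthogonal_orthogonal dotB_nondeg dotB_isRefl]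

lemma mem_code_iff {m : ℕ} (C : Submodule 𝔽 (Fin n → 𝔽)) (H : Matrix (Fin m) (Fin n) 𝔽)
    (hH : Submodule.span 𝔽 (Set.range fun r => H r) = dualCode C) (x : Fin n → 𝔽) :
    x ∈ C ↔ ∀ r, ∑ j, H r j * x j = 0 := by
  conv_lhs => rw [← dualCode_dualCode C]
  rw [← hH]
  constructor
  · intro hx r
    exact hx (H r) (Submodule.subset_span ⟨r, rfl⟩)
  · intro hx c hc
    induction hc using Submodule.span_induction with
    | mem y hy => obtain ⟨r, rfl⟩ := hy; exact hx r
    | zero => simp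
    | add y z _ _ hy hz => simp [add_mul, Finset.sum_add_distrib, hy, hz]
    | smul a y _ hy =>
      simp only [Pi.smul_apply, smul_eq_mul, mul_assoc, ← Finset.mul_sum, hy, mul_zero]

lemma SLDset_eq {m : ℕ} (C : Submodule 𝔽 (Fin n → 𝔽)) (H : Matrix (Fin m) (Fin n) 𝔽)
    (hH : Submodule.span 𝔽 (Set.range fun r => H r) = dualCode C) :
    SLDset H = hwt '' {v : Fin n → 𝔽 | v ∈ C ∧ v ≠ 0} := by
  ext s
  constructor
  · rintro ⟨fs, rfl, hne, c, hc0, hsum⟩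
    set v : Fin n → 𝔽 := fun j => if j ∈ fs then c j else 0 with hv
    have hsupp : {j | v j ≠ 0} = ↑fs := by
      ext j
      by_cases hj : j ∈ fs <;> simp [hv, hj, hc0 j]
    refine ⟨v, ⟨?_, ?_⟩, ?_⟩
    · rw [mem_code_iff C H hH]
      intro r
      have h0 : ∑ j ∈ fs, c j * H r j = 0 := by
        have := congrFun hsum r
        simpa [Finset.sum_apply] using this
      calc ∑ j, H r j * v j = ∑ j ∈ fs, H r j * v j :=
            (Finset.sum_subset (Finset.subset_univ fs)
              (fun j _ hj => by simp [hv, hj])).symm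
        _ = ∑ j ∈ fs, c j * H r j :=
            Finset.sum_congr rfl fun j hj => by simp [hv, hj, mul_comm]
        _ = 0 := h0
    · obtain ⟨j, hj⟩ := hne
      intro h0
      exact hc0 j hj (by simpa [hv, hj] using congrFun h0 j)
    · rw [hwt, hsupp, Set.ncard_coe_finset]
  · rintro ⟨v, ⟨hvC, hv0⟩, rfl⟩
    classical
    set fs : Finset (Fin n) := Finset.univ.filter (fun j => v j ≠ 0) with hfs
    have hsupp : {j | v j ≠ 0} = ↑fs := by ext j; simp [hfs]
    refine ⟨fs, by rw [hwt, hsupp, Set.ncard_coe_finset], ?_, v, ?_, ?_⟩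
    · obtain ⟨j, hj⟩ := Function.ne_iff.mp hv0
      have hj' : v j ≠ 0 := by simpa using hj
      exact ⟨j, by simp [hfs, hj']⟩
    · intro j hj; simpa [hfs] using hj
    · funext r
      have h0 : ∑ j, H r j * v j = 0 := (mem_code_iff C H hH v).mp hvC r
      simp only [Finset.sum_apply, Pi.zero_apply, smul_eq_mul]
      calc ∑ j ∈ fs, v j * H r j = ∑ j, v j * H r j :=
            Finset.sum_subset (Finset.subset_univ fs)
              (fun j _ hj => by
                have : v j = 0 := by by_contra h; exact hj (by simp [hfs, h])
                simp [this])
        _ = 0 := by rw [← h0]; exact Finset.sum_congr rfl fun j _ => mul_comm _ _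

lemma hwt_le (x : Fin n → 𝔽) : hwt x ≤ n := by
  have : {i | x i ≠ 0}.ncard ≤ (Set.univ : Set (Fin n)).ncard :=
    Set.ncard_le_ncard (Set.subset_univ _) Set.finite_univ
  simpa [hwt, Set.ncard_univ] using this

lemma hwt_smul {a : 𝔽} (ha : a ≠ 0) (v : Fin n → 𝔽) : hwt (a • v) = hwt v := by
  unfold hwt
  congr 1
  ext i
  simp [ha]

lemma dminN_span_singleton {v : Fin n → 𝔽} (hv : v ≠ 0) :
    dminN hwt (Submodule.span 𝔽 {v}) = hwt v := by
  have hset : hwt '' {w : Fin n → 𝔽 | w ∈ Submodule.span 𝔽 {v} ∧ w ≠ 0} = {hwt v} := by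
    apply Set.eq_singleton_iff_unique_mem.mpr
    constructor
    · exact ⟨v, ⟨Submodule.mem_span_singleton_self v, hv⟩, rfl⟩
    · rintro s ⟨w, ⟨hw, hw0⟩, rfl⟩
      obtain ⟨a, rfl⟩ := Submodule.mem_span_singleton.mp hw
      have ha : a ≠ 0 := by rintro rfl; simp at hw0
      exact hwt_smul ha v
  rw [dminN, hset, csInf_singleton]

lemma exists_subcode (C : Submodule 𝔽 (Fin n → 𝔽)) {i : ℕ} (hi : i ≤ finrank 𝔽 C) :
    ∃ D : Submodule 𝔽 (Fin n → 𝔽), D ≤ C ∧ finrank 𝔽 D = i := by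
  set b : Basis (Fin (finrank 𝔽 C)) 𝔽 C := Module.finBasis 𝔽 C
  have hb : LinearIndependent 𝔽 (fun j : Fin (finrank 𝔽 C) => (b j : Fin n → 𝔽)) :=
    b.linearIndependent.map' C.subtype C.ker_subtype
  have hli : LinearIndependent 𝔽 (fun j : Fin i => (b (Fin.castLE hi j) : Fin n → 𝔽)) :=
    hb.comp (Fin.castLE hi) (Fin.castLE_injective hi)
  refine ⟨Submodule.span 𝔽 (Set.range fun j : Fin i => (b (Fin.castLE hi j) : Fin n → 𝔽)),
    ?_, ?_⟩
  · rw [Submodule.span_le]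
    rintro _ ⟨j, rfl⟩
    exact (b (Fin.castLE hi j)).2
  · rw [finrank_span_eq_card hli, Fintype.card_fin]

end aux

theorem alpha_mem_SLD {𝔽 : Type*} [Field 𝔽] [Fintype 𝔽] {n m k : ℕ}
    (C : Submodule 𝔽 (Fin n → 𝔽)) (hC : C ≠ ⊥) (hk : finrank 𝔽 C = k)
    (H : Matrix (Fin m) (Fin n) 𝔽)
    (hH : Submodule.span 𝔽 (Set.range fun r => H r) = dualCode C) :
    (∀ i, 1 ≤ i → i ≤ k → alphaN hwt C i ∈ SLDset H) ∧
    alphaN hwt C 1 = sSup (SLDset H) ∧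
    alphaN hwt C k = sInf (SLDset H) := by
  set W := hwt '' {v : Fin n → 𝔽 | v ∈ C ∧ v ≠ 0} with hW
  have hSLD : SLDset H = W := SLDset_eq C H hH
  have hWne : W.Nonempty := by
    obtain ⟨v, hv, hv0⟩ := Submodule.exists_mem_ne_zero_of_ne_bot hC
    exact ⟨hwt v, v, ⟨hv, hv0⟩, rfl⟩
  have hWbdd : BddAbove W := ⟨n, by rintro s ⟨v, _, rfl⟩; exact hwt_le v⟩
  have hk1 : 1 ≤ k := by
    rcases Nat.eq_zero_or_pos k with h0 | h
    · exfalso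
      exact hC (Submodule.finrank_eq_zero.mp (h0 ▸ hk))
    · exact h
  have hdmem : ∀ D : Submodule 𝔽 (Fin n → 𝔽), D ≤ C → D ≠ ⊥ → dminN hwt D ∈ W := by
    intro D hDC hD0
    obtain ⟨v, hv, hv0⟩ := Submodule.exists_mem_ne_zero_of_ne_bot hD0
    have hne : (hwt '' {v : Fin n → 𝔽 | v ∈ D ∧ v ≠ 0}).Nonempty :=
      ⟨hwt v, v, ⟨hv, hv0⟩, rfl⟩
    obtain ⟨w, ⟨hwD, hw0⟩, heq⟩ := Nat.sInf_mem hne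
    exact ⟨w, ⟨hDC hwD, hw0⟩, heq⟩
  have main : ∀ i, 1 ≤ i → i ≤ k → alphaN hwt C i ∈ W := by
    intro i h1 hik
    have hcond : i ≤ finrank 𝔽 C := hk ▸ hik
    rw [alphaN, if_pos hcond]
    set T := dminN hwt '' {D : Submodule 𝔽 (Fin n → 𝔽) | D ≤ C ∧ finrank 𝔽 D = i} with hT
    have hTW : T ⊆ W := by
      rintro t ⟨D, ⟨hDC, hDi⟩, rfl⟩
      refine hdmem D hDC fun hbot => ?_
      rw [hbot, finrank_bot] at hDi
      omega
    have hTne : T.Nonempty := by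
      obtain ⟨D, hDC, hDi⟩ := exists_subcode C hcond
      exact ⟨_, ⟨D, ⟨hDC, hDi⟩, rfl⟩⟩
    exact hTW (Nat.sSup_mem hTne (hWbdd.mono hTW))
  refine ⟨fun i h1 hik => hSLD ▸ main i h1 hik, ?_, ?_⟩
  · rw [hSLD]
    apply le_antisymm
    · exact le_csSup hWbdd (main 1 le_rfl hk1)
    · obtain ⟨v, ⟨hvC, hv0⟩, hveq⟩ := Nat.sSup_mem hWne hWbdd
      have hcond : 1 ≤ finrank 𝔽 C := hk ▸ hk1
      rw [alphaN, if_pos hcond]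
      set T := dminN hwt '' {D : Submodule 𝔽 (Fin n → 𝔽) | D ≤ C ∧ finrank 𝔽 D = 1} with hT
      have hTW : T ⊆ W := by
        rintro t ⟨D, ⟨hDC, hDi⟩, rfl⟩
        refine hdmem D hDC fun hbot => ?_
        rw [hbot, finrank_bot] at hDi
        omega
      have hDmem : dminN hwt (Submodule.span 𝔽 {v}) ∈ T := by
        refine ⟨Submodule.span 𝔽 {v}, ⟨?_, finrank_span_singleton hv0⟩, rfl⟩
        rw [Submodule.span_le, Set.singleton_subset_iff]
        exact hvC
      calc sSup W = hwt v := hveq.symm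
        _ = dminN hwt (Submodule.span 𝔽 {v}) := (dminN_span_singleton hv0).symm
        _ ≤ sSup T := le_csSup (hWbdd.mono hTW) hDmem
  · rw [hSLD]
    have hcond : k ≤ finrank 𝔽 C := hk.ge
    rw [alphaN, if_pos hcond]
    have hset : {D : Submodule 𝔽 (Fin n → 𝔽) | D ≤ C ∧ finrank 𝔽 D = k} = {C} := by
      ext D
      constructor
      · rintro ⟨hDC, hDk⟩
        exact Submodule.eq_of_le_of_finrank_le hDC (by rw [hDk, hk])
      · rintro rfl
        exact ⟨le_rfl, hk⟩
    rw [hset, Set.image_singleton, csSup_singleton]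
    rfl
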